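/- Let Λ = ⊕_{j=1}^d ℤ e_j with the translation operators T_k (k ∈ ℕ₀^d(Λ₀)) on a module satisfying T_k T_l = T_{k+l}. Then the formal power series T(u) = Σ_{k ∈ ℕ^d(Λ₀)} u^k T_k is rational: there exist a finite set E ⊆ ℕ₀^d and k⁽¹⁾,…,k⁽ᵈ⁾ ∈ ℕ₀^d such that T(u)·∏_{i=1}^d (1 − T_{k⁽ⁱ⁾} u^{k⁽ⁱ⁾}) = Σ_{e ∈ E} u^{k(e)} T_{k(e)} as formal power series. -/

import Mathlib

open scoped Classical

/-- Rationality of the generating series of the translation operators.  Let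
`Λ₀` be a finite index sublattice of `ℤ^d` and let `T` be a multiplicative
family of "translation operators" indexed by the lattice points
`k ∈ ℕ₀^d(Λ₀)` (i.e. `T_k T_l = T_{k+l}`), with values in a commutative ring.
Then the formal power series `T(u) = Σ_{k ∈ ℕ^d(Λ₀)} u^k T_k` is rational:
there exist a finite set `E` and `k⁽¹⁾, …, k⁽ᵈ⁾ ∈ ℕ₀^d(Λ₀)` with
`T(u) · ∏ᵢ (1 − T_{k⁽ⁱ⁾} u^{k⁽ⁱ⁾}) = Σ_{e ∈ E} u^e T_e`. -/
theorem stmt17 (d : ℕ) {R : Type*} [CommRing R]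
    (Λ₀ : AddSubgroup (Fin d → ℤ)) [Λ₀.FiniteIndex]
    (T : (Fin d →₀ ℕ) → R)
    (hT : ∀ k l : Fin d →₀ ℕ, ((fun j => (k j : ℤ)) ∈ Λ₀) →
      ((fun j => (l j : ℤ)) ∈ Λ₀) → T (k + l) = T k * T l)
    (Tu : MvPowerSeries (Fin d) R)
    (hTu : ∀ k : Fin d →₀ ℕ, MvPowerSeries.coeff k Tu
      = if (∀ j, 1 ≤ k j) ∧ ((fun j => (k j : ℤ)) ∈ Λ₀) then T k else 0) :
    ∃ (E : Finset (Fin d →₀ ℕ)) (kk : Fin d → (Fin d →₀ ℕ)),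
      (∀ e ∈ E, (fun j => (e j : ℤ)) ∈ Λ₀) ∧
      (∀ i, (fun j => ((kk i) j : ℤ)) ∈ Λ₀) ∧
      Tu * ∏ i, (1 - MvPowerSeries.monomial (kk i) (T (kk i)))
        = ∑ e ∈ E, MvPowerSeries.monomial e (T e) := by
  classical
  set N := Λ₀.index with hNdef
  have hN : 0 < N := Nat.pos_of_ne_zero AddSubgroup.FiniteIndex.index_ne_zero
  set kk : Fin d → (Fin d →₀ ℕ) := fun i => Finsupp.single i N with hkk
  -- the generators belong to Λ₀
  have hkkmem : ∀ i, (fun j => ((kk i) j : ℤ)) ∈ Λ₀ := by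
    intro i
    have h1 : (fun j => ((kk i) j : ℤ)) = N • (fun j => if i = j then (1 : ℤ) else 0) := by
      funext j
      simp only [hkk, Finsupp.single_apply, Pi.smul_apply, smul_eq_mul]
      split <;> simp
    rw [h1, hNdef]
    exact AddSubgroup.nsmul_index_mem Λ₀ _
  -- closure under addition
  have hφadd : ∀ k l : Fin d →₀ ℕ, ((fun j => (k j : ℤ)) ∈ Λ₀) →
      ((fun j => (l j : ℤ)) ∈ Λ₀) → ((fun j => ((k + l) j : ℤ)) ∈ Λ₀) := by
    intro k l hk hl
    have h1 : (fun j => ((k + l) j : ℤ)) =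
        (fun j => (k j : ℤ)) + (fun j => (l j : ℤ)) := by
      funext j; simp [Finsupp.add_apply]
    rw [h1]; exact Λ₀.add_mem hk hl
  -- closure under subtraction
  have hφsub : ∀ k m : Fin d →₀ ℕ, k ≤ m → ((fun j => (k j : ℤ)) ∈ Λ₀) →
      ((fun j => (m j : ℤ)) ∈ Λ₀) → ((fun j => ((m - k) j : ℤ)) ∈ Λ₀) := by
    intro k m hle hk hm
    have h1 : (fun j => ((m - k) j : ℤ)) =
        (fun j => (m j : ℤ)) - (fun j => (k j : ℤ)) := by
      funext j
      have := Finsupp.le_def.mp hle j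
      simp [Finsupp.tsub_apply, Nat.cast_sub this]
    rw [h1]; exact Λ₀.sub_mem hm hk
  -- key induction
  have key : ∀ I : Finset (Fin d), ∀ m : Fin d →₀ ℕ,
      MvPowerSeries.coeff m
        (Tu * ∏ i ∈ I, (1 - MvPowerSeries.monomial (kk i) (T (kk i))))
      = if (∀ j, 1 ≤ m j) ∧ ((fun j => (m j : ℤ)) ∈ Λ₀) ∧ (∀ i ∈ I, m i ≤ N)
        then T m else 0 := by
    intro I
    induction I using Finset.induction_on with
    | empty =>
      intro m
      rw [Finset.prod_empty, mul_one, hTu]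
      simp
    | @insert a I hi ih =>
      intro m
      rw [Finset.prod_insert hi]
      have hre : Tu * ((1 - MvPowerSeries.monomial (kk a) (T (kk a))) *
            ∏ i ∈ I, (1 - MvPowerSeries.monomial (kk i) (T (kk i))))
          = Tu * ∏ i ∈ I, (1 - MvPowerSeries.monomial (kk i) (T (kk i)))
            - (Tu * ∏ i ∈ I, (1 - MvPowerSeries.monomial (kk i) (T (kk i)))) *
              MvPowerSeries.monomial (kk a) (T (kk a)) := by ring
      rw [hre, map_sub, MvPowerSeries.coeff_mul_monomial, ih m]
      by_cases hle : kk a ≤ m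
      · have hNa : N ≤ m a := by
          have := Finsupp.le_def.mp hle a
          simpa [hkk] using this
        rw [if_pos hle, ih]
        have hsub : ∀ j, (m - kk a) j = m j - (if a = j then N else 0) := by
          intro j; simp [Finsupp.tsub_apply, hkk, Finsupp.single_apply]
        by_cases hma : m a ≤ N
        · -- m a = N exactly
          have hma' : m a = N := le_antisymm hma hNa
          have hz : ¬ (∀ j, 1 ≤ (m - kk a) j) := by
            intro h
            have := h a
            rw [hsub a] at this
            simp [hma'] at this
          rw [if_neg (show ¬ ((∀ j, 1 ≤ (m - kk a) j) ∧
            ((fun j => ((m - kk a) j : ℤ)) ∈ Λ₀) ∧ (∀ i ∈ I, (m - kk a) i ≤ N))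
            from fun h => hz h.1)]
          by_cases hC : (∀ j, 1 ≤ m j) ∧ ((fun j => (m j : ℤ)) ∈ Λ₀) ∧ (∀ i ∈ I, m i ≤ N)
          · rw [if_pos hC, if_pos ⟨hC.1, hC.2.1, by
              intro i hiI
              rcases Finset.mem_insert.mp hiI with h | h
              · subst h; exact hma
              · exact hC.2.2 i h⟩]
            ring
          · rw [if_neg hC, if_neg (by
              intro hC'
              exact hC ⟨hC'.1, hC'.2.1, fun i hiI => hC'.2.2 i (Finset.mem_insert_of_mem hiI)⟩)]
            ring
        · -- N < m a
          push_neg at hma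
          have hnotins : ¬ ((∀ j, 1 ≤ m j) ∧ ((fun j => (m j : ℤ)) ∈ Λ₀) ∧
              (∀ i ∈ insert a I, m i ≤ N)) := by
            rintro ⟨-, -, h3⟩
            exact absurd (h3 a (Finset.mem_insert_self a I)) (not_le.mpr hma)
          rw [if_neg hnotins]
          have hCiff : ((∀ j, 1 ≤ (m - kk a) j) ∧ ((fun j => ((m - kk a) j : ℤ)) ∈ Λ₀) ∧
              (∀ i ∈ I, (m - kk a) i ≤ N)) ↔
              ((∀ j, 1 ≤ m j) ∧ ((fun j => (m j : ℤ)) ∈ Λ₀) ∧ (∀ i ∈ I, m i ≤ N)) := by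
            constructor
            · rintro ⟨h1, h2, h3⟩
              have hmmem : (fun j => (m j : ℤ)) ∈ Λ₀ := by
                have := hφadd _ _ h2 (hkkmem a)
                rwa [tsub_add_cancel_of_le hle] at this
              refine ⟨fun j => ?_, hmmem, fun i hiI => ?_⟩
              · by_cases hja : a = j
                · subst hja; omega
                · have := h1 j; rw [hsub j] at this; simpa [hja] using this
              · have hia : a ≠ i := fun h => hi (h ▸ hiI)
                have := h3 i hiI; rw [hsub i] at this; simpa [hia] using this
            · rintro ⟨h1, h2, h3⟩
              refine ⟨fun j => ?_, hφsub _ _ hle (hkkmem a) h2, fun i hiI => ?_⟩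
              · rw [hsub j]
                by_cases hja : a = j
                · subst hja; simp; omega
                · simp [hja]; exact h1 j
              · have hia : a ≠ i := fun h => hi (h ▸ hiI)
                rw [hsub i]; simp [hia]; exact h3 i hiI
          by_cases hC : (∀ j, 1 ≤ m j) ∧ ((fun j => (m j : ℤ)) ∈ Λ₀) ∧ (∀ i ∈ I, m i ≤ N)
          · rw [if_pos hC, if_pos (hCiff.mpr hC)]
            have hmul : T m = T (m - kk a) * T (kk a) := by
              have := hT (m - kk a) (kk a) (hφsub _ _ hle (hkkmem a) hC.2.1) (hkkmem a)
              rwa [tsub_add_cancel_of_le hle] at this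
            rw [hmul]; ring
          · rw [if_neg hC, if_neg (fun h => hC (hCiff.mp h))]
            ring
      · -- kk a ≤ m fails, i.e. m a < N
        have hma : m a < N := by
          by_contra h
          exact hle (Finsupp.single_le_iff.mpr (not_lt.mp h))
        rw [if_neg hle, sub_zero]
        have : ((∀ j, 1 ≤ m j) ∧ ((fun j => (m j : ℤ)) ∈ Λ₀) ∧ (∀ i ∈ I, m i ≤ N)) ↔
            ((∀ j, 1 ≤ m j) ∧ ((fun j => (m j : ℤ)) ∈ Λ₀) ∧ (∀ i ∈ insert a I, m i ≤ N)) := by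
          constructor
          · rintro ⟨h1, h2, h3⟩
            exact ⟨h1, h2, fun i hiI => by
              rcases Finset.mem_insert.mp hiI with h | h
              · subst h; exact le_of_lt hma
              · exact h3 i h⟩
          · rintro ⟨h1, h2, h3⟩
            exact ⟨h1, h2, fun i hiI => h3 i (Finset.mem_insert_of_mem hiI)⟩
        simp only [this]
  -- assemble
  set c : Fin d →₀ ℕ := Finsupp.equivFunOnFinite.symm (fun _ => N) with hc
  have hcap : ∀ j, c j = N := fun j => rfl
  refine ⟨(Finset.Iic c).filter
      (fun m => (∀ j, 1 ≤ m j) ∧ ((fun j => (m j : ℤ)) ∈ Λ₀)), kk, ?_, hkkmem, ?_⟩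
  · intro e he
    exact ((Finset.mem_filter.mp he).2).2
  · ext m
    rw [key Finset.univ m, map_sum]
    simp only [MvPowerSeries.coeff_monomial]
    rw [Finset.sum_ite_eq]
    have hmem : m ∈ (Finset.Iic c).filter
        (fun m => (∀ j, 1 ≤ m j) ∧ ((fun j => (m j : ℤ)) ∈ Λ₀)) ↔
        ((∀ j, 1 ≤ m j) ∧ ((fun j => (m j : ℤ)) ∈ Λ₀) ∧ (∀ i ∈ Finset.univ, m i ≤ N)) := by
      rw [Finset.mem_filter, Finset.mem_Iic, Finsupp.le_def]
      constructor
      · rintro ⟨h1, h2, h3⟩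
        exact ⟨h2, h3, fun i _ => by rw [← hcap i]; exact h1 i⟩
      · rintro ⟨h1, h2, h3⟩
        exact ⟨fun i => by rw [hcap i]; exact h3 i (Finset.mem_univ i), h1, h2⟩
    by_cases h : m ∈ (Finset.Iic c).filter
        (fun m => (∀ j, 1 ≤ m j) ∧ ((fun j => (m j : ℤ)) ∈ Λ₀))
    · rw [if_pos h, if_pos (hmem.mp h)]
    · rw [if_neg h, if_neg (fun h' => h (hmem.mpr h'))]
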